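/- Let A ∈ (0,1) and B > 0. There exist constants R = R(A,B), r = r(A,B) ∈ (0,1) such that for every holomorphic function f : 𝔻 → ℂ on the open unit disc satisfying f(0) = 0, sup_{z∈𝔻} |f(z)| ≤ B, and A < |f'(0)| < A⁻¹, there exists an open set U_f containing the disc D(0,r) such that f restricted to U_f is a biholomorphism onto D(0,R). -/

import Mathlib

open Metric Set

set_option maxHeartbeats 1000000

/-- **Inverse-function lemma with uniform radii.**
For any constants `A ∈ (0,1)` and `B > 0` there exist radii `R, r ∈ (0,1)` such that every
holomorphic function `f` on the unit disc with `f 0 = 0`, `sup norm ≤ B` and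
`A < |f'(0)| < A⁻¹` is a biholomorphism from some open set `U_f ⊇ D(0,r)` onto `D(0,R)`. -/
theorem uniform_inversion_lemma (A B : ℝ) (hA : A ∈ Ioo (0:ℝ) 1) (hB : 0 < B) :
    ∃ R ∈ Ioo (0:ℝ) 1, ∃ r ∈ Ioo (0:ℝ) 1,
      ∀ f : ℂ → ℂ, DifferentiableOn ℂ f (ball 0 1) → f 0 = 0 →
        (∀ z ∈ ball (0:ℂ) 1, ‖f z‖ ≤ B) →
        A < ‖deriv f 0‖ → ‖deriv f 0‖ < A⁻¹ →
        ∃ U : Set ℂ, IsOpen U ∧ ball (0:ℂ) r ⊆ U ∧ U ⊆ ball (0:ℂ) 1 ∧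
          Set.BijOn f U (ball (0:ℂ) R) ∧
          ∃ g : ℂ → ℂ, DifferentiableOn ℂ g (ball (0:ℂ) R) ∧
            (∀ z ∈ U, g (f z) = z) ∧ (∀ w ∈ ball (0:ℂ) R, f (g w) = w) := by
  obtain ⟨hA0, hA1⟩ := hA
  have hAinv : (1 : ℝ) < A⁻¹ := (one_lt_inv₀ hA0).2 hA1
  -- constants
  set M : ℝ := 4 * (2 * B + 1) with hMdef
  have hM0 : 0 < M := by positivity
  set K : ℝ := (2 * M + 1) * (4 / 3) with hKdef
  have hK0 : 0 < K := by positivity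
  set ρ : ℝ := min (1 / 2) (A / (2 * K)) with hρdef
  have hρ0 : 0 < ρ := lt_min (by norm_num) (by positivity)
  have hρ2 : ρ ≤ 1 / 2 := min_le_left _ _
  have hKρ : K * ρ ≤ A / 2 := by
    have h1 : ρ ≤ A / (2 * K) := min_le_right _ _
    have h2 : K * ρ ≤ K * (A / (2 * K)) := by nlinarith
    have h3 : K * (A / (2 * K)) = A / 2 := by field_simp
    linarith
  set R : ℝ := A * ρ / 4 with hRdef
  have hR0 : 0 < R := by positivity
  refine ⟨R, ⟨hR0, by nlinarith⟩, ?_⟩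
  set r : ℝ := min ρ (R / (A⁻¹ + 1)) with hrdef
  have hr0 : 0 < r := lt_min hρ0 (by positivity)
  have hrρ : r ≤ ρ := min_le_left _ _
  refine ⟨r, ⟨hr0, by linarith [hrρ]⟩, ?_⟩
  intro f fd f0 fb ha1 ha2
  set a : ℂ := deriv f 0 with hadef
  have hA' : 0 < ‖a‖ := lt_trans hA0 ha1
  have ha0 : a ≠ 0 := by
    intro h; rw [h, norm_zero] at hA'; exact lt_irrefl _ hA'
  -- derivative bound on ball 0 (3/4)
  have hd34 : ∀ z ∈ ball (0 : ℂ) (3 / 4), ‖deriv f z‖ ≤ M := by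
    intro z hz
    rw [mem_ball, dist_zero_right] at hz
    have hsub : ball z (1 / 4) ⊆ ball (0 : ℂ) 1 := by
      intro w hw
      rw [mem_ball, dist_eq_norm] at hw
      rw [mem_ball, dist_zero_right]
      calc ‖w‖ = ‖(w - z) + z‖ := by ring_nf
        _ ≤ ‖w - z‖ + ‖z‖ := norm_add_le _ _
        _ < 1 / 4 + 3 / 4 := by linarith
        _ = 1 := by norm_num
    have hz1 : z ∈ ball (0 : ℂ) 1 := by
      rw [mem_ball, dist_zero_right]; linarith
    have hmaps : MapsTo f (ball z (1 / 4)) (ball (f z) (2 * B + 1)) := by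
      intro w hw
      rw [mem_ball, dist_eq_norm]
      calc ‖f w - f z‖ ≤ ‖f w‖ + ‖f z‖ := norm_sub_le _ _
        _ < 2 * B + 1 := by
            have h1 := fb w (hsub hw)
            have h2 := fb z hz1
            linarith
    have := Complex.norm_deriv_le_div_of_mapsTo_ball (fd.mono hsub) (hmaps.mono_right ball_subset_closedBall) (by norm_num)
    calc ‖deriv f z‖ ≤ (2 * B + 1) / (1 / 4) := this
      _ = M := by rw [hMdef]; ring
  -- deriv f is holomorphic on the unit ball
  have hderivDiff : DifferentiableOn ℂ (deriv f) (ball (0 : ℂ) 1) :=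
    ((fd.analyticOnNhd isOpen_ball).deriv).differentiableOn
  have hball34 : ball (0 : ℂ) (3 / 4) ⊆ ball (0 : ℂ) 1 := ball_subset_ball (by norm_num)
  -- the key Lipschitz-type estimate for deriv f near 0
  have hlip : ∀ z ∈ closedBall (0 : ℂ) ρ, ‖deriv f z - a‖ ≤ A / 2 := by
    intro z hz
    rw [mem_closedBall, dist_zero_right] at hz
    have hz34 : z ∈ ball (0 : ℂ) (3 / 4) := by
      rw [mem_ball, dist_zero_right]; linarith
    have h0mem : (0 : ℂ) ∈ ball (0 : ℂ) (3 / 4) := mem_ball_self (by norm_num)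
    have hmaps : MapsTo (deriv f) (ball (0 : ℂ) (3 / 4)) (ball (deriv f 0) (2 * M + 1)) := by
      intro w hw
      rw [mem_ball, dist_eq_norm]
      calc ‖deriv f w - deriv f 0‖ ≤ ‖deriv f w‖ + ‖deriv f 0‖ := norm_sub_le _ _
        _ < 2 * M + 1 := by
            have h1 := hd34 w hw
            have h2 := hd34 0 h0mem
            linarith
    have hS := Complex.dist_le_div_mul_dist_of_mapsTo_ball (hderivDiff.mono hball34) (hmaps.mono_right ball_subset_closedBall) hz34
    rw [dist_eq_norm, dist_zero_right] at hS
    calc ‖deriv f z - a‖ ≤ (2 * M + 1) / (3 / 4) * ‖z‖ := hS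
      _ = K * ‖z‖ := by rw [hKdef]; ring
      _ ≤ K * ρ := by nlinarith [norm_nonneg z]
      _ ≤ A / 2 := hKρ
  -- the linear approximation
  set L : ℂ ≃L[ℂ] ℂ := ContinuousLinearEquiv.unitsEquivAut ℂ (Units.mk0 a ha0) with hLdef
  have hLapp : ∀ x : ℂ, (L : ℂ →L[ℂ] ℂ) x = x * a := fun x => rfl
  set cnn : NNReal := ⟨A / 2, by positivity⟩ with hcnndef
  have hcnn_coe : (cnn : ℝ) = A / 2 := rfl
  have hballsub : closedBall (0 : ℂ) ρ ⊆ ball (0 : ℂ) 1 := by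
    apply (closedBall_subset_ball (show ρ < 1 by linarith)).trans
    exact subset_rfl
  have halo : ApproximatesLinearOn f (L : ℂ →L[ℂ] ℂ) (closedBall (0 : ℂ) ρ) cnn := by
    intro x hx y hy
    have hconv : Convex ℝ (closedBall (0 : ℂ) ρ) := convex_closedBall _ _
    have hg : ∀ z ∈ closedBall (0 : ℂ) ρ,
        HasDerivWithinAt (fun w => f w - w * a) (deriv f z - a) (closedBall (0 : ℂ) ρ) z := by
      intro z hz
      have hfz : HasDerivAt f (deriv f z) z :=
        (fd.differentiableAt (isOpen_ball.mem_nhds (hballsub hz))).hasDerivAt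
      exact (hfz.sub (hasDerivAt_mul_const a)).hasDerivWithinAt
    have hbound : ∀ z ∈ closedBall (0 : ℂ) ρ, ‖deriv f z - a‖ ≤ A / 2 := hlip
    have := hconv.norm_image_sub_le_of_norm_hasDerivWithin_le hg hbound hy hx
    -- this : ‖(f x - x * a) - (f y - y * a)‖ ≤ A / 2 * ‖x - y‖
    rw [hLapp]
    calc ‖f x - f y - (x - y) * a‖ = ‖(f x - x * a) - (f y - y * a)‖ := by ring_nf
      _ ≤ A / 2 * ‖x - y‖ := this
      _ = (cnn : ℝ) * ‖x - y‖ := by rw [hcnn_coe]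
  -- the norm of the inverse linear map
  have hLsymm : (L.symm : ℂ →L[ℂ] ℂ) =
      ContinuousLinearMap.smulRight (1 : ℂ →L[ℂ] ℂ) a⁻¹ := by
    ext
    simp [hLdef]
  have hN : ‖(L.symm : ℂ →L[ℂ] ℂ)‖₊ = ‖a‖₊⁻¹ := by
    have h1 : ‖(L.symm : ℂ →L[ℂ] ℂ)‖ = ‖a‖⁻¹ := by
      rw [hLsymm, ContinuousLinearMap.norm_smulRight_apply, ContinuousLinearMap.one_def, ContinuousLinearMap.norm_id, one_mul, norm_inv]
    ext
    rw [coe_nnnorm, h1, NNReal.coe_inv, coe_nnnorm]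
  have hna_pos : (0 : NNReal) < ‖a‖₊ := by
    rw [← NNReal.coe_lt_coe, coe_nnnorm]; exact hA'
  have hcn : cnn < ‖(L.symm : ℂ →L[ℂ] ℂ)‖₊⁻¹ := by
    rw [hN, inv_inv, ← NNReal.coe_lt_coe, hcnn_coe, coe_nnnorm]
    linarith
  have hinjOn : InjOn f (closedBall (0 : ℂ) ρ) := halo.injOn (Or.inr hcn)
  -- surjectivity onto a ball
  have hsurj := halo.surjOn_closedBall_of_nonlinearRightInverse L.toNonlinearRightInverse
    (le_of_lt hρ0) (subset_refl _)
  have hnnnorm : ((L.toNonlinearRightInverse.nnnorm : ℝ))⁻¹ = ‖a‖ := by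
    have : L.toNonlinearRightInverse.nnnorm = ‖(L.symm : ℂ →L[ℂ] ℂ)‖₊ := rfl
    rw [this, hN, NNReal.coe_inv, coe_nnnorm, inv_inv]
  have hsurj' : SurjOn f (closedBall (0 : ℂ) ρ) (closedBall (0 : ℂ) ((‖a‖ - A / 2) * ρ)) := by
    have : f 0 = 0 := f0
    rw [this] at hsurj
    have heq : ((L.toNonlinearRightInverse.nnnorm : ℝ)⁻¹ - cnn) * ρ = (‖a‖ - A / 2) * ρ := by
      rw [hnnnorm, hcnn_coe]
    rwa [heq] at hsurj
  -- pointwise bounds from the approximation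
  have hupper : ∀ z ∈ closedBall (0 : ℂ) ρ, ‖f z‖ ≤ (‖a‖ + A / 2) * ‖z‖ := by
    intro z hz
    have h0m : (0 : ℂ) ∈ closedBall (0 : ℂ) ρ := mem_closedBall_self (le_of_lt hρ0)
    have := halo z hz 0 h0m
    rw [hLapp, f0, sub_zero, sub_zero, hcnn_coe] at this
    calc ‖f z‖ = ‖(f z - z * a) + z * a‖ := by ring_nf
      _ ≤ ‖f z - z * a‖ + ‖z * a‖ := norm_add_le _ _
      _ ≤ A / 2 * ‖z‖ + ‖z‖ * ‖a‖ := by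
          rw [norm_mul]; exact add_le_add this le_rfl
      _ = (‖a‖ + A / 2) * ‖z‖ := by ring
  have hlower : ∀ z ∈ closedBall (0 : ℂ) ρ, (‖a‖ - A / 2) * ‖z‖ ≤ ‖f z‖ := by
    intro z hz
    have h0m : (0 : ℂ) ∈ closedBall (0 : ℂ) ρ := mem_closedBall_self (le_of_lt hρ0)
    have := halo z hz 0 h0m
    rw [hLapp, f0, sub_zero, sub_zero, hcnn_coe] at this
    have h1 : ‖z * a‖ ≤ ‖f z‖ + ‖f z - z * a‖ := by
      calc ‖z * a‖ = ‖f z - (f z - z * a)‖ := by ring_nf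
        _ ≤ ‖f z‖ + ‖f z - z * a‖ := norm_sub_le _ _
    rw [norm_mul] at h1
    nlinarith [norm_nonneg z]
  -- the open set U
  set U : Set ℂ := ball (0 : ℂ) ρ ∩ f ⁻¹' (ball (0 : ℂ) R) with hUdef
  have hUopen : IsOpen U := by
    have hcont : ContinuousOn f (ball (0 : ℂ) ρ) :=
      (fd.continuousOn).mono (ball_subset_ball (by linarith))
    exact hcont.isOpen_inter_preimage isOpen_ball isOpen_ball
  have hUsub1 : U ⊆ ball (0 : ℂ) 1 := fun z hz =>
    (ball_subset_ball (by linarith : ρ ≤ 1)) hz.1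
  have hUsubρ : U ⊆ closedBall (0 : ℂ) ρ := fun z hz => ball_subset_closedBall hz.1
  -- ball 0 r ⊆ U
  have hrU : ball (0 : ℂ) r ⊆ U := by
    intro z hz
    rw [mem_ball, dist_zero_right] at hz
    have hzρ : z ∈ ball (0 : ℂ) ρ := by
      rw [mem_ball, dist_zero_right]; exact lt_of_lt_of_le hz hrρ
    refine ⟨hzρ, ?_⟩
    have hzcb : z ∈ closedBall (0 : ℂ) ρ := ball_subset_closedBall hzρ
    have h1 := hupper z hzcb
    have h2 : r ≤ R / (A⁻¹ + 1) := min_le_right _ _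
    have h3 : ‖a‖ + A / 2 ≤ A⁻¹ + 1 := by linarith
    have h4 : (A⁻¹ + 1) * r ≤ R := by
      have h5 := mul_le_mul_of_nonneg_left h2 (by positivity : (0:ℝ) ≤ A⁻¹ + 1)
      calc (A⁻¹ + 1) * r ≤ (A⁻¹ + 1) * (R / (A⁻¹ + 1)) := h5
        _ = R := by field_simp
    rw [mem_preimage, mem_ball, dist_zero_right]
    calc ‖f z‖ ≤ (‖a‖ + A / 2) * ‖z‖ := h1
      _ ≤ (A⁻¹ + 1) * ‖z‖ := by nlinarith [norm_nonneg z]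
      _ < (A⁻¹ + 1) * r := by nlinarith [norm_nonneg z]
      _ ≤ R := h4
  -- BijOn
  have hmaps : MapsTo f U (ball (0 : ℂ) R) := fun z hz => mem_preimage.mp hz.2
  have hinjU : InjOn f U := hinjOn.mono hUsubρ
  have hsurjU : SurjOn f U (ball (0 : ℂ) R) := by
    intro w hw
    rw [mem_ball, dist_zero_right] at hw
    have hwcb : w ∈ closedBall (0 : ℂ) ((‖a‖ - A / 2) * ρ) := by
      rw [mem_closedBall, dist_zero_right]
      have : R ≤ (‖a‖ - A / 2) * ρ := by nlinarith
      linarith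
    obtain ⟨z, hzcb, hfz⟩ := hsurj' hwcb
    have hzball : z ∈ ball (0 : ℂ) ρ := by
      rw [mem_ball, dist_zero_right]
      have h1 := hlower z hzcb
      rw [hfz] at h1
      -- (‖a‖ - A/2) * ‖z‖ ≤ ‖w‖ < R = A * ρ / 4
      have h2 : A / 2 ≤ ‖a‖ - A / 2 := by linarith
      by_contra hcon
      push_neg at hcon
      have : A / 2 * ρ ≤ (‖a‖ - A / 2) * ‖z‖ := by nlinarith [norm_nonneg z]
      have hRlt : R < A / 2 * ρ := by rw [hRdef]; nlinarith
      linarith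
    exact ⟨z, ⟨hzball, by rw [mem_preimage, hfz, mem_ball, dist_zero_right]; exact hw⟩, hfz⟩
  have hbij : BijOn f U (ball (0 : ℂ) R) := ⟨hmaps, hinjU, hsurjU⟩
  -- the inverse function
  set g : ℂ → ℂ := Function.invFunOn f U with hgdef
  have hinv : InvOn g f U (ball (0 : ℂ) R) := hbij.invOn_invFunOn
  refine ⟨U, hUopen, hrU, hUsub1, hbij, g, ?_, fun z hz => hinv.1 hz, fun w hw => hinv.2 hw⟩
  -- g is holomorphic on ball 0 R
  intro w hw
  have hgw : g w ∈ U := by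
    obtain ⟨z, hzU, hfz⟩ := hsurjU hw
    rw [← hfz, hgdef]
    rw [show Function.invFunOn f U (f z) = z from hinv.1 hzU]
    exact hzU
  set z : ℂ := g w with hzdef
  have hfzw : f z = w := hinv.2 hw
  have hz1 : z ∈ ball (0 : ℂ) 1 := hUsub1 hgw
  obtain ⟨p, hp⟩ := (fd.analyticOnNhd isOpen_ball) z hz1
  have hstrict := hp.hasStrictDerivAt
  have hderiv_eq : (p 1 fun _ => 1) = deriv f z := hstrict.hasDerivAt.deriv.symm
  have hdne : (p 1 fun _ => 1) ≠ 0 := by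
    rw [hderiv_eq]
    intro hcon
    have h1 := hlip z (hUsubρ hgw)
    rw [hcon, zero_sub, norm_neg] at h1
    linarith
  have hleft : ∀ᶠ x in nhds z, g (f x) = x := by
    filter_upwards [hUopen.mem_nhds hgw] with x hx
    exact hinv.1 hx
  have hg_strict := hstrict.to_local_left_inverse hdne hleft
  rw [hfzw] at hg_strict
  exact (HasStrictFDerivAt.differentiableAt hg_strict).differentiableWithinAt
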